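/- Let D be a squarefree integer, p an odd prime, and let c, k, ℓ be positive integers with gcd(c·k, p) = 1. Set N = c·k·p^ℓ − 1, assume N is odd and that the Jacobi symbol (D/N) = −1. Let w ∈ ℤ[√D] satisfy N(w) ≡ 1 (mod N). Suppose there exists an integer j with 1 ≤ j ≤ ℓ such that (i) Φ_p(w^{c·k·p^{j−1}}) ≡ 0 (mod N), and (ii) c·k·p^ℓ ≤ p^{2j} (equivalently, 2j ≥ log_p(c·k) + ℓ). Then N is prime. -/

import Mathlib

open Polynomial

lemma charP_quot {D : ℤ} {q : ℕ} (hq : q.Prime) :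
    CharP (Zsqrtd D ⧸ Ideal.span {(q : Zsqrtd D)}) q := by
  constructor
  intro n
  have h0 : ((n : ℕ) : Zsqrtd D ⧸ Ideal.span {(q : Zsqrtd D)}) =
      Ideal.Quotient.mk _ ((n : ℕ) : Zsqrtd D) := by push_cast; rfl
  rw [h0, Ideal.Quotient.eq_zero_iff_mem, Ideal.mem_span_singleton,
    show ((q : ℕ) : Zsqrtd D) = ((q : ℤ) : Zsqrtd D) by push_cast; rfl,
    show ((n : ℕ) : Zsqrtd D) = ((n : ℤ) : Zsqrtd D) by push_cast; rfl,
    Zsqrtd.intCast_dvd]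
  simp [Int.natCast_dvd_natCast]

lemma intCast_quot_eq_zero {D : ℤ} {q : ℕ} {n : ℤ} (hdvd : (q : ℤ) ∣ n) :
    ((n : ℤ) : Zsqrtd D ⧸ Ideal.span {(q : Zsqrtd D)}) = 0 := by
  obtain ⟨t, ht⟩ := hdvd
  subst ht
  push_cast
  have h1 : ((q : ℕ) : Zsqrtd D ⧸ Ideal.span {(q : Zsqrtd D)}) = 0 := by
    rw [show ((q : ℕ) : Zsqrtd D ⧸ Ideal.span {(q : Zsqrtd D)}) =
      Ideal.Quotient.mk _ ((q : ℕ) : Zsqrtd D) from by push_cast; rfl,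
      Ideal.Quotient.eq_zero_iff_mem, Ideal.mem_span_singleton]
  rw [h1, zero_mul]

lemma int_fermat_quot {D : ℤ} {q : ℕ} [Fact q.Prime] (a : ℤ) :
    ((a : ℤ) : Zsqrtd D ⧸ Ideal.span {(q : Zsqrtd D)}) ^ q = ((a : ℤ) : _) := by
  have h1 : (q : ℤ) ∣ a ^ q - a := by
    have := ZMod.pow_card (a : ZMod q)
    rwa [← ZMod.intCast_zmod_eq_zero_iff_dvd, Int.cast_sub, Int.cast_pow, sub_eq_zero]
  have := intCast_quot_eq_zero (D := D) h1
  push_cast at this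
  linear_combination this

set_option synthInstance.maxHeartbeats 1000000 in
lemma frob_quot {D : ℤ} {q : ℕ} [hqf : Fact q.Prime] (hq2 : Odd q) (w : Zsqrtd D) :
    (Ideal.Quotient.mk (Ideal.span {(q : Zsqrtd D)}) w) ^ q
      = ((w.re : ℤ) : Zsqrtd D ⧸ Ideal.span {(q : Zsqrtd D)})
        + ((D : ℤ) : Zsqrtd D ⧸ Ideal.span {(q : Zsqrtd D)}) ^ (q / 2)
          * (Ideal.Quotient.mk _ Zsqrtd.sqrtd)
          * ((w.im : ℤ) : Zsqrtd D ⧸ Ideal.span {(q : Zsqrtd D)}) := by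
  haveI := charP_quot (D := D) hqf.out
  set A := Zsqrtd D ⧸ Ideal.span {(q : Zsqrtd D)} with hA
  set f := Ideal.Quotient.mk (Ideal.span {(q : Zsqrtd D)}) with hf
  have hw : w = (w.re : Zsqrtd D) + Zsqrtd.sqrtd * (w.im : Zsqrtd D) := by
    ext <;> simp
  have hsq : (Zsqrtd.sqrtd : Zsqrtd D) ^ q = (D : Zsqrtd D) ^ (q / 2) * Zsqrtd.sqrtd := by
    conv_lhs => rw [show q = 2 * (q / 2) + 1 from (Nat.div_add_mod q 2).symm.trans (by
      rw [Nat.odd_iff.mp hq2])]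
    rw [pow_succ, pow_mul, sq, Zsqrtd.dmuld]
  have h1 : f w = ((w.re : ℤ) : A) + f Zsqrtd.sqrtd * ((w.im : ℤ) : A) := by
    conv_lhs => rw [hw]
    rw [map_add, map_mul, map_intCast, map_intCast]
  rw [h1, add_pow_char, mul_pow, int_fermat_quot, int_fermat_quot, ← map_pow, hsq,
    map_mul, map_pow, map_intCast]

set_option synthInstance.maxHeartbeats 1000000 in
set_option maxHeartbeats 1000000 in
lemma key_lemma {D : ℤ} {q p e : ℕ} [hqf : Fact q.Prime] (hqodd : Odd q)
    (hqD : ¬ (q : ℤ) ∣ D) (hp : p.Prime) (hqp : q ≠ p) (he : e ≠ 0) (w : Zsqrtd D)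
    (hw : (q : ℤ) ∣ (w.norm - 1))
    (hcyc : (q : Zsqrtd D) ∣ Polynomial.aeval (w ^ e) (Polynomial.cyclotomic p ℤ)) :
    ∃ m : ℕ, m = p * Nat.gcd m e ∧ (m ∣ q - 1 ∨ m ∣ q + 1) := by
  haveI := charP_quot (D := D) hqf.out
  haveI hpf : Fact p.Prime := ⟨hp⟩
  set A := Zsqrtd D ⧸ Ideal.span {(q : Zsqrtd D)} with hA
  set f := Ideal.Quotient.mk (Ideal.span {(q : Zsqrtd D)}) with hf
  -- f w * f (star w) = 1
  have hnorm1 : ((w.norm : ℤ) : A) = 1 := by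
    have h0 := intCast_quot_eq_zero (D := D) (q := q) hw
    push_cast at h0 ⊢
    linear_combination h0
  have hstar : f w * f (star w) = 1 := by
    rw [← map_mul, ← Zsqrtd.norm_eq_mul_conj]
    calc f ((w.norm : ℤ) : Zsqrtd D) = ((w.norm : ℤ) : A) := by rw [map_intCast]
      _ = 1 := hnorm1
  -- legendre symbol
  have hDZ : (D : ZMod q) ≠ 0 := by
    rwa [Ne, ZMod.intCast_zmod_eq_zero_iff_dvd]
  have hleg := legendreSym.eq_one_or_neg_one q hDZ
  have heuler : ((D : ℤ) : A) ^ (q / 2) = ((legendreSym q D : ℤ) : A) := by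
    have h1 : ((D ^ (q / 2) - legendreSym q D : ℤ) : ZMod q) = 0 := by
      push_cast
      rw [legendreSym.eq_pow, sub_self]
    rw [ZMod.intCast_zmod_eq_zero_iff_dvd] at h1
    have h2 := intCast_quot_eq_zero (D := D) (q := q) h1
    push_cast at h2
    linear_combination h2
  -- main dichotomy
  have hq3 : 3 ≤ q := by
    rcases hqf.out.two_le.lt_or_eq with h | h
    · omega
    · exfalso; rw [← h] at hqodd; exact (Nat.not_odd_iff_even.mpr (by decide)) hqodd
  have hpow : (f w) ^ (q - 1) = 1 ∨ (f w) ^ (q + 1) = 1 := by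
    rcases hleg with h | h
    · left
      have hfq : (f w) ^ q = f w := by
        rw [frob_quot hqodd w, heuler, h]
        push_cast
        have hw' : w = (w.re : Zsqrtd D) + Zsqrtd.sqrtd * (w.im : Zsqrtd D) := by ext <;> simp
        conv_rhs => rw [hw']
        rw [map_add, map_mul, map_intCast, map_intCast]
        ring
      have : (f w) ^ (q - 1) * (f w * f (star w)) = f w * f (star w) := by
        rw [← mul_assoc, ← pow_succ, Nat.sub_add_cancel (by omega), hfq]
      rwa [hstar, mul_one] at this
    · right
      have hfq : (f w) ^ q = f (star w) := by
        rw [frob_quot hqodd w, heuler, h]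
        have hw' : star w = (w.re : Zsqrtd D) + Zsqrtd.sqrtd * ((-w.im : ℤ) : Zsqrtd D) := by
          ext <;> simp [Zsqrtd.re_star, Zsqrtd.im_star]
        conv_rhs => rw [hw']
        rw [map_add, map_mul, map_intCast, map_intCast]
        push_cast
        ring
      rw [pow_succ, hfq, mul_comm]
      exact hstar
  have hfin : IsOfFinOrder (f w) := by
    rcases hpow with h | h
    · exact isOfFinOrder_iff_pow_eq_one.mpr ⟨q - 1, by omega, h⟩
    · exact isOfFinOrder_iff_pow_eq_one.mpr ⟨q + 1, by omega, h⟩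
  -- order of x := f (w^e) is p
  set x : A := f (w ^ e) with hx
  have hmap : f (Polynomial.aeval (w ^ e) (Polynomial.cyclotomic p ℤ))
      = Polynomial.aeval x (Polynomial.cyclotomic p ℤ) := by
    rw [Polynomial.aeval_def, Polynomial.aeval_def, Polynomial.hom_eval₂,
      Subsingleton.elim (f.comp (algebraMap ℤ (Zsqrtd D))) (algebraMap ℤ A)]
  have hsum : ∑ i ∈ Finset.range p, x ^ i = 0 := by
    obtain ⟨t, ht⟩ := hcyc
    have hq0 : f ((q : ℕ) : Zsqrtd D) = 0 := by
      rw [map_natCast]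
      exact CharP.cast_eq_zero A q
    have h0 : Polynomial.aeval x (Polynomial.cyclotomic p ℤ) = 0 := by
      rw [← hmap, ht, map_mul, hq0, zero_mul]
    rw [Polynomial.cyclotomic_prime] at h0
    rw [← h0]
    simp [Polynomial.aeval_X_pow]
  have hxp : x ^ p = 1 := by
    have hg := geom_sum_mul x p
    rw [hsum, zero_mul] at hg
    rw [← sub_eq_zero, ← hg]
  have hx1 : x ≠ 1 := by
    intro h
    rw [h] at hsum
    simp only [one_pow, Finset.sum_const, Finset.card_range, nsmul_eq_mul, mul_one] at hsum
    have : (q : ℕ) ∣ p := (CharP.cast_eq_zero_iff A q p).mp hsum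
    exact hqp ((Nat.prime_dvd_prime_iff_eq hqf.out hp).mp this)
  have hordx : orderOf x = p := by
    have hdvd := orderOf_dvd_of_pow_eq_one hxp
    rcases (hp.eq_one_or_self_of_dvd _ hdvd) with h | h
    · exact absurd (orderOf_eq_one_iff.mp h) hx1
    · exact h
  set m : ℕ := orderOf (f w) with hm
  have hxpow : x = (f w) ^ e := by rw [hx, map_pow]
  have hordp : m / Nat.gcd m e = p := by
    rw [← hordx, hxpow, orderOf_pow' _ he]
  have hmain : m = p * Nat.gcd m e := by
    have := Nat.div_mul_cancel (Nat.gcd_dvd_left m e)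
    rw [hordp] at this
    omega
  refine ⟨m, hmain, ?_⟩
  rcases hpow with h | h
  · exact Or.inl (orderOf_dvd_of_pow_eq_one h)
  · exact Or.inr (orderOf_dvd_of_pow_eq_one h)


/-- Theorem 1.2 (Generalized Lucasian Certificate): a sufficient condition for
primality of `N = c·k·p^ℓ − 1`. -/
theorem stmt_1 (D : ℤ) (hD : Squarefree D)
    (p : ℕ) (hp : p.Prime) (hpodd : Odd p)
    (c k ℓ : ℕ) (hc : 0 < c) (hk : 0 < k) (hℓ : 0 < ℓ)
    (hgcd : Nat.gcd (c * k) p = 1)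
    (N : ℕ) (hN : N = c * k * p ^ ℓ - 1) (hNodd : Odd N)
    (hJ : jacobiSym D N = -1)
    (w : Zsqrtd D)
    (hnorm : (N : ℤ) ∣ (w.norm - 1))
    (hj : ∃ j : ℕ, 1 ≤ j ∧ j ≤ ℓ ∧
      (N : Zsqrtd D) ∣
        (Polynomial.aeval (w ^ (c * k * p ^ (j - 1))) (Polynomial.cyclotomic p ℤ)) ∧
      c * k * p ^ ℓ ≤ p ^ (2 * j)) :
    N.Prime := by
  obtain ⟨j, hj1, hjℓ, hcyc, hsize⟩ := hj
  set e := c * k * p ^ (j - 1) with he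
  have hp3 : 3 ≤ p := by
    rcases hp.two_le.lt_or_eq with h | h
    · omega
    · exfalso; rw [← h] at hpodd; exact (by decide : ¬ Odd 2) hpodd
  have hck : 0 < c * k := Nat.mul_pos hc hk
  have hpl : 3 ≤ p ^ ℓ := le_trans hp3 (Nat.le_self_pow (by omega) p)
  have hckpl : 3 ≤ c * k * p ^ ℓ := le_trans hpl (Nat.le_mul_of_pos_left _ hck)
  have hN1 : N + 1 = c * k * p ^ ℓ := by rw [hN]; omega
  have hN2 : 2 ≤ N := by omega
  haveI : NeZero N := ⟨by omega⟩
  have hpN : ¬ p ∣ N := by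
    intro h
    have h1 : p ∣ N + 1 := by
      rw [hN1]
      exact Dvd.dvd.mul_left (dvd_pow_self p (by omega)) _
    have h2 : p ∣ 1 := by
      have := Nat.dvd_sub h1 h
      simpa using this
    have h3 := Nat.le_of_dvd one_pos h2
    have := hp.two_le
    omega
  have hDN : Int.gcd D N = 1 := by
    by_contra h
    have h0 : jacobiSym D N = 0 := jacobiSym.eq_zero_iff_not_coprime.mpr h
    rw [hJ] at h0
    norm_num at h0
  -- every prime factor r of N satisfies 2 * p ^ j ≤ r + 1
  have key2 : ∀ r : ℕ, r.Prime → r ∣ N → 2 * p ^ j ≤ r + 1 := by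
    intro r hr hrN
    haveI := Fact.mk hr
    have hrodd : Odd r := by
      rcases hr.eq_two_or_odd' with h | h
      · exfalso
        rw [h] at hrN
        rw [Nat.odd_iff] at hNodd
        omega
      · exact h
    have hrD : ¬ (r : ℤ) ∣ D := by
      intro hd
      have h1 : (r : ℤ) ∣ (N : ℤ) := Int.natCast_dvd_natCast.mpr hrN
      have h2 := Int.dvd_gcd hd h1
      rw [hDN] at h2
      have h3 : (r : ℤ) ∣ 1 := by exact_mod_cast h2
      have := Int.le_of_dvd one_pos h3
      have := hr.two_le
      omega
    have hrp : r ≠ p := by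
      intro h
      exact hpN (h ▸ hrN)
    have hrnorm : (r : ℤ) ∣ w.norm - 1 :=
      dvd_trans (Int.natCast_dvd_natCast.mpr hrN) hnorm
    have hrcyc : (r : Zsqrtd D) ∣
        Polynomial.aeval (w ^ e) (Polynomial.cyclotomic p ℤ) := by
      refine dvd_trans ?_ hcyc
      obtain ⟨s, hs⟩ := hrN
      rw [hs]
      push_cast
      exact Dvd.intro _ rfl
    have he0 : e ≠ 0 := by
      have : 0 < p ^ (j - 1) := Nat.pow_pos (by omega)
      positivity
    obtain ⟨m, hm, hdvd⟩ := key_lemma hrodd hrD hp hrp he0 w hrnorm hrcyc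
    -- p ^ j ∣ m
    have hstep : ∀ i, i ≤ j → p ^ i ∣ m := by
      intro i
      induction i with
      | zero => simp
      | succ i ih =>
        intro hij
        have h1 : p ^ i ∣ m := ih (by omega)
        have h2 : p ^ i ∣ e := by
          refine dvd_trans (pow_dvd_pow p (by omega : i ≤ j - 1)) ?_
          exact dvd_mul_left _ _
        have h3 : p ^ i ∣ Nat.gcd m e := Nat.dvd_gcd h1 h2
        rw [hm, pow_succ, mul_comm p (Nat.gcd m e)]
        exact Nat.mul_dvd_mul h3 dvd_rfl
    have hpjm : p ^ j ∣ m := hstep j le_rfl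
    set P := p ^ j with hP
    have hPodd : Odd P := hpodd.pow
    have hP3 : 3 ≤ P := le_trans hp3 (Nat.le_self_pow (by omega) p)
    have hcop2 : Nat.Coprime 2 P := by
      rw [Nat.Prime.coprime_iff_not_dvd Nat.prime_two]
      rw [Nat.odd_iff] at hPodd
      omega
    have hr3 : 3 ≤ r := by
      have := hr.two_le
      rcases hrodd with ⟨u, hu⟩
      omega
    rcases hdvd with h | h
    · -- P ∣ m ∣ r - 1
      obtain ⟨t, ht⟩ := dvd_trans hpjm h
      have ht2 : 2 ∣ t := by
        refine hcop2.dvd_of_dvd_mul_left ?_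
        rw [← ht]
        rw [Nat.odd_iff] at hrodd
        omega
      have htpos : t ≠ 0 := by
        intro h0
        rw [h0, Nat.mul_zero] at ht
        omega
      have ht2' : 2 ≤ t := by omega
      have : P * 2 ≤ P * t := Nat.mul_le_mul_left P ht2'
      omega
    · obtain ⟨t, ht⟩ := dvd_trans hpjm h
      have ht2 : 2 ∣ t := by
        refine hcop2.dvd_of_dvd_mul_left ?_
        rw [← ht]
        rw [Nat.odd_iff] at hrodd
        omega
      have htpos : t ≠ 0 := by
        intro h0
        rw [h0, Nat.mul_zero] at ht
        omega
      have ht2' : 2 ≤ t := by omega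
      have : P * 2 ≤ P * t := Nat.mul_le_mul_left P ht2'
      omega
  -- conclude
  by_contra hNP
  have hN0 : N ≠ 1 := by omega
  set r := N.minFac with hrdef
  have hrprime : r.Prime := Nat.minFac_prime hN0
  obtain ⟨s, hsN⟩ := Nat.minFac_dvd N
  have hrN : r ∣ N := ⟨s, hsN⟩
  have hs0 : s ≠ 0 := by
    intro h
    rw [h, Nat.mul_zero] at hsN
    omega
  have hs1 : s ≠ 1 := by
    intro h
    rw [h, Nat.mul_one] at hsN
    exact hNP (hsN ▸ hrprime)
  set r' := s.minFac with hr'def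
  have hr'prime : r'.Prime := Nat.minFac_prime hs1
  have hr'N : r' ∣ N := (Nat.minFac_dvd s).trans ⟨r, by rw [hsN, mul_comm]⟩
  have hr'le : r' ≤ s := Nat.minFac_le (Nat.pos_of_ne_zero hs0)
  have h1 := key2 r hrprime hrN
  have h2 := key2 r' hr'prime hr'N
  set P := p ^ j with hP
  have hP3 : 3 ≤ P := le_trans hp3 (Nat.le_self_pow (by omega) p)
  have hsge : 2 * P - 1 ≤ s := by omega
  have hrge : 2 * P - 1 ≤ r := by omega
  have hmul : (2 * P - 1) * (2 * P - 1) ≤ r * s := Nat.mul_le_mul hrge hsge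
  rw [← hsN] at hmul
  have hNP2 : N + 1 ≤ P * P := by
    rw [hN1]
    calc c * k * p ^ ℓ ≤ p ^ (2 * j) := hsize
      _ = P * P := by rw [hP, ← pow_add]; ring_nf
  set Q := 2 * P - 1 with hQdef
  have hQ : Q + 1 = 2 * P := by omega
  have hQQ : Q * Q + 2 * Q + 1 = 4 * (P * P) := by
    have h4 : (Q + 1) * (Q + 1) = Q * Q + 2 * Q + 1 := by ring
    have h5 : (Q + 1) * (Q + 1) = 4 * (P * P) := by rw [hQ]; ring
    omega
  have hYP : 3 * P ≤ P * P := Nat.mul_le_mul_right P hP3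
  omega
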